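/- Let ρ be a density operator on a finite-dimensional Hilbert space H_A ⊗ H_B and for each x ∈ X let {E^x_y}_{y∈Y}, {F^x_y}_{y∈Y} be POVMs on H_A, H_B respectively (positive semidefinite operators summing to the identity). Suppose tr_A(ρ) and tr_B(ρ) have full rank and the correlation p(a,b|x,x') = tr(ρ (E^x_a ⊗ F^{x'}_b)) is synchronous (p(a,b|x,x) = 0 for a ≠ b). Then each E^x_y and each F^x_y is a projection. -/

import Mathlib

open Matrix Kronecker
open scoped ComplexOrder

/-- partial trace over the first factor: `tr_A ρ` acts on `H_B`. -/
noncomputable def ptraceA {dA dB : ℕ} (ρ : Matrix (Fin dA × Fin dB) (Fin dA × Fin dB) ℂ) :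
    Matrix (Fin dB) (Fin dB) ℂ :=
  fun i j => ∑ k : Fin dA, ρ (k, i) (k, j)

/-- partial trace over the second factor: `tr_B ρ` acts on `H_A`. -/
noncomputable def ptraceB {dA dB : ℕ} (ρ : Matrix (Fin dA × Fin dB) (Fin dA × Fin dB) ℂ) :
    Matrix (Fin dA) (Fin dA) ℂ :=
  fun i j => ∑ k : Fin dB, ρ (i, k) (j, k)

lemma aux_trace_zero {n m : Type*} [Fintype n] [Fintype m] (X : Matrix m n ℂ)
    (h : (Xᴴ * X).trace = 0) : X = 0 := by
  have key : ∑ j : n, ∑ i : m, Complex.normSq (X i j) = 0 := by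
    have h2 : (Xᴴ * X).trace = ((∑ j : n, ∑ i : m, Complex.normSq (X i j) : ℝ) : ℂ) := by
      simp only [Matrix.trace, Matrix.diag, Matrix.mul_apply, Matrix.conjTranspose_apply]
      push_cast
      congr 1; ext j; congr 1; ext i
      rw [Complex.normSq_eq_conj_mul_self]
      rfl
    rw [h2] at h
    exact_mod_cast h
  ext i j
  have h3 := (Finset.sum_eq_zero_iff_of_nonneg (fun j _ =>
    Finset.sum_nonneg fun i _ => Complex.normSq_nonneg _)).mp key j (Finset.mem_univ _)
  have h4 := (Finset.sum_eq_zero_iff_of_nonneg (fun i _ =>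
    Complex.normSq_nonneg _)).mp h3 i (Finset.mem_univ _)
  simpa using Complex.normSq_eq_zero.mp h4

lemma aux_psd_mul_eq_zero {n : Type*} [Fintype n] {P M : Matrix n n ℂ}
    (hP : P.PosSemidef) (hM : M.PosSemidef) (h : (P * M).trace = 0) : P * M = 0 := by
  obtain ⟨A, rfl⟩ : ∃ B : Matrix n n ℂ, _ = Bᴴ * B := by
    classical
    open scoped MatrixOrder in exact CStarAlgebra.nonneg_iff_eq_star_mul_self.mp hP.nonneg
  obtain ⟨B, rfl⟩ : ∃ B : Matrix n n ℂ, _ = Bᴴ * B := by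
    classical
    open scoped MatrixOrder in exact CStarAlgebra.nonneg_iff_eq_star_mul_self.mp hM.nonneg
  have key : B * Aᴴ = 0 := by
    apply aux_trace_zero
    have e : ((B * Aᴴ)ᴴ * (B * Aᴴ)).trace = (Aᴴ * A * (Bᴴ * B)).trace := by
      rw [conjTranspose_mul, conjTranspose_conjTranspose]
      rw [show A * Bᴴ * (B * Aᴴ) = A * (Bᴴ * B * Aᴴ) by simp [Matrix.mul_assoc]]
      rw [Matrix.trace_mul_comm]
      simp only [Matrix.mul_assoc]
      rw [← Matrix.mul_assoc, Matrix.trace_mul_comm, Matrix.mul_assoc]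
    rw [e, h]
  calc Aᴴ * A * (Bᴴ * B) = Aᴴ * (B * Aᴴ)ᴴ * B := by
        rw [conjTranspose_mul, conjTranspose_conjTranspose]; simp [Matrix.mul_assoc]
    _ = 0 := by rw [key]; simp

lemma aux_kron_conjT {m n : Type*} (A : Matrix m m ℂ) (B : Matrix n n ℂ) :
    (A ⊗ₖ B)ᴴ = Aᴴ ⊗ₖ Bᴴ := by
  ext ⟨i, j⟩ ⟨k, l⟩
  simp [Matrix.conjTranspose_apply, star_mul']

lemma aux_kron_psd {m n : Type*} [Fintype m] [Fintype n] {A : Matrix m m ℂ} {B : Matrix n n ℂ}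
    (hA : A.PosSemidef) (hB : B.PosSemidef) : (A ⊗ₖ B).PosSemidef := by
  obtain ⟨A', rfl⟩ : ∃ B : Matrix m m ℂ, _ = Bᴴ * B := by
    classical
    open scoped MatrixOrder in exact CStarAlgebra.nonneg_iff_eq_star_mul_self.mp hA.nonneg
  obtain ⟨B', rfl⟩ : ∃ B : Matrix n n ℂ, _ = Bᴴ * B := by
    classical
    open scoped MatrixOrder in exact CStarAlgebra.nonneg_iff_eq_star_mul_self.mp hB.nonneg
  have : (A'ᴴ * A') ⊗ₖ (B'ᴴ * B') = (A' ⊗ₖ B')ᴴ * (A' ⊗ₖ B') := by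
    rw [aux_kron_conjT, Matrix.mul_kronecker_mul]
  rw [this]
  exact posSemidef_conjTranspose_mul_self _

lemma aux_kron_sum {m n : Type*} {Y : Type} [Fintype Y] (A : Matrix m m ℂ)
    (F : Y → Matrix n n ℂ) : ∑ y, A ⊗ₖ F y = A ⊗ₖ (∑ y, F y) := by
  ext ⟨i, j⟩ ⟨k, l⟩
  simp [Matrix.sum_apply, Finset.mul_sum]

lemma aux_sum_kron {m n : Type*} {Y : Type} [Fintype Y] (E : Y → Matrix m m ℂ)
    (B : Matrix n n ℂ) : ∑ y, E y ⊗ₖ B = (∑ y, E y) ⊗ₖ B := by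
  ext ⟨i, j⟩ ⟨k, l⟩
  simp [Matrix.sum_apply, Finset.sum_mul]

lemma aux_ptraceB_mul {dA dB : ℕ} (ρ : Matrix (Fin dA × Fin dB) (Fin dA × Fin dB) ℂ)
    (M : Matrix (Fin dA) (Fin dA) ℂ) :
    ptraceB (ρ * (M ⊗ₖ (1 : Matrix (Fin dB) (Fin dB) ℂ))) = ptraceB ρ * M := by
  ext i j
  show ∑ k : Fin dB, (ρ * (M ⊗ₖ (1 : Matrix (Fin dB) (Fin dB) ℂ))) (i, k) (j, k)
      = ∑ i', (∑ k, ρ (i, k) (i', k)) * M i' j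
  have step : ∀ k : Fin dB, (ρ * (M ⊗ₖ (1 : Matrix (Fin dB) (Fin dB) ℂ))) (i, k) (j, k)
      = ∑ i', ρ (i, k) (i', k) * M i' j := by
    intro k
    rw [Matrix.mul_apply, Fintype.sum_prod_type]
    congr 1; funext i'
    simp [Matrix.one_apply, mul_ite, Finset.sum_ite_eq', mul_comm]
  simp_rw [step]
  rw [Finset.sum_comm]
  simp_rw [Finset.sum_mul]

lemma aux_ptraceA_mul {dA dB : ℕ} (ρ : Matrix (Fin dA × Fin dB) (Fin dA × Fin dB) ℂ)
    (N : Matrix (Fin dB) (Fin dB) ℂ) :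
    ptraceA (ρ * ((1 : Matrix (Fin dA) (Fin dA) ℂ) ⊗ₖ N)) = ptraceA ρ * N := by
  ext k l
  show ∑ i : Fin dA, (ρ * ((1 : Matrix (Fin dA) (Fin dA) ℂ) ⊗ₖ N)) (i, k) (i, l)
      = ∑ k', (∑ i, ρ (i, k) (i, k')) * N k' l
  have step : ∀ i : Fin dA, (ρ * ((1 : Matrix (Fin dA) (Fin dA) ℂ) ⊗ₖ N)) (i, k) (i, l)
      = ∑ k', ρ (i, k) (i, k') * N k' l := by
    intro i
    rw [Matrix.mul_apply, Fintype.sum_prod_type]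
    simp [Matrix.one_apply, ite_mul, mul_ite, Finset.sum_ite_eq', Finset.sum_ite_eq,
      Matrix.mul_apply]
  simp_rw [step]
  rw [Finset.sum_comm]
  simp_rw [Finset.sum_mul]

theorem stmt_4
    {X Y : Type} [Fintype X] [Fintype Y] [Nonempty X] [Nonempty Y]
    {dA dB : ℕ}
    (ρ : Matrix (Fin dA × Fin dB) (Fin dA × Fin dB) ℂ)
    (hρpsd : ρ.PosSemidef) (hρtr : ρ.trace = 1)
    (hfullA : (ptraceA ρ).det ≠ 0) (hfullB : (ptraceB ρ).det ≠ 0)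
    (E : X → Y → Matrix (Fin dA) (Fin dA) ℂ)
    (F : X → Y → Matrix (Fin dB) (Fin dB) ℂ)
    (hE : ∀ x y, (E x y).PosSemidef) (hF : ∀ x y, (F x y).PosSemidef)
    (hE1 : ∀ x, ∑ y, E x y = 1) (hF1 : ∀ x, ∑ y, F x y = 1)
    (hsync : ∀ x a b, a ≠ b → (ρ * (E x a ⊗ₖ F x b)).trace = 0) :
    ∀ x y, E x y * E x y = E x y ∧ F x y * F x y = F x y := by
  classical
  intro x a
  -- step 1: ρ * (E x a ⊗ F x b) = 0 for a ≠ b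
  have hz : ∀ a b : Y, a ≠ b → ρ * (E x a ⊗ₖ F x b) = 0 := fun a b hab =>
    aux_psd_mul_eq_zero hρpsd (aux_kron_psd (hE x a) (hF x b)) (hsync x a b hab)
  -- step 2: ρ * (E a ⊗ 1) = ρ * (E a ⊗ F a)
  have hEa : ρ * (E x a ⊗ₖ (1 : Matrix (Fin dB) (Fin dB) ℂ)) = ρ * (E x a ⊗ₖ F x a) := by
    have : ∑ b, ρ * (E x a ⊗ₖ F x b) = ρ * (E x a ⊗ₖ (1 : Matrix (Fin dB) (Fin dB) ℂ)) := by
      rw [← Finset.mul_sum, aux_kron_sum, hF1]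
    rw [← this, Fintype.sum_eq_single a (fun b hb => hz a b (Ne.symm hb))]
  have hFa : ρ * ((1 : Matrix (Fin dA) (Fin dA) ℂ) ⊗ₖ F x a) = ρ * (E x a ⊗ₖ F x a) := by
    have : ∑ b, ρ * (E x b ⊗ₖ F x a) = ρ * ((1 : Matrix (Fin dA) (Fin dA) ℂ) ⊗ₖ F x a) := by
      rw [← Finset.mul_sum, aux_sum_kron, hE1]
    rw [← this, Fintype.sum_eq_single a (fun b hb => hz b a hb)]
  have key : ρ * (E x a ⊗ₖ (1 : Matrix (Fin dB) (Fin dB) ℂ))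
      = ρ * ((1 : Matrix (Fin dA) (Fin dA) ℂ) ⊗ₖ F x a) := hEa.trans hFa.symm
  have hEF : ρ * ((1 : Matrix (Fin dA) (Fin dA) ℂ) ⊗ₖ F x a)
      * (E x a ⊗ₖ (1 : Matrix (Fin dB) (Fin dB) ℂ)) = ρ * (E x a ⊗ₖ F x a) := by
    rw [Matrix.mul_assoc, ← Matrix.mul_kronecker_mul, one_mul, mul_one]
  -- step 3: idempotence relations under ρ
  have hEsq : ρ * ((E x a * E x a) ⊗ₖ (1 : Matrix (Fin dB) (Fin dB) ℂ))
      = ρ * (E x a ⊗ₖ (1 : Matrix (Fin dB) (Fin dB) ℂ)) := by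
    calc ρ * ((E x a * E x a) ⊗ₖ (1 : Matrix (Fin dB) (Fin dB) ℂ))
        = ρ * (E x a ⊗ₖ (1 : Matrix (Fin dB) (Fin dB) ℂ))
            * (E x a ⊗ₖ (1 : Matrix (Fin dB) (Fin dB) ℂ)) := by
          rw [Matrix.mul_assoc, ← Matrix.mul_kronecker_mul, mul_one]
      _ = ρ * (E x a ⊗ₖ F x a) := by rw [key, hEF]
      _ = ρ * (E x a ⊗ₖ (1 : Matrix (Fin dB) (Fin dB) ℂ)) := hEa.symm
  have hFsq : ρ * ((1 : Matrix (Fin dA) (Fin dA) ℂ) ⊗ₖ (F x a * F x a))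
      = ρ * ((1 : Matrix (Fin dA) (Fin dA) ℂ) ⊗ₖ F x a) := by
    calc ρ * ((1 : Matrix (Fin dA) (Fin dA) ℂ) ⊗ₖ (F x a * F x a))
        = ρ * ((1 : Matrix (Fin dA) (Fin dA) ℂ) ⊗ₖ F x a)
            * ((1 : Matrix (Fin dA) (Fin dA) ℂ) ⊗ₖ F x a) := by
          rw [Matrix.mul_assoc, ← Matrix.mul_kronecker_mul, mul_one]
      _ = ρ * (E x a ⊗ₖ (1 : Matrix (Fin dB) (Fin dB) ℂ))
            * ((1 : Matrix (Fin dA) (Fin dA) ℂ) ⊗ₖ F x a) := by rw [key]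
      _ = ρ * (E x a ⊗ₖ F x a) := by
          rw [Matrix.mul_assoc, ← Matrix.mul_kronecker_mul, one_mul, mul_one]
      _ = ρ * ((1 : Matrix (Fin dA) (Fin dA) ℂ) ⊗ₖ F x a) := hFa.symm
  -- step 4: partial trace and cancel
  have hEfin : ptraceB ρ * (E x a * E x a) = ptraceB ρ * E x a := by
    have := congrArg ptraceB hEsq
    rwa [aux_ptraceB_mul, aux_ptraceB_mul] at this
  have hFfin : ptraceA ρ * (F x a * F x a) = ptraceA ρ * F x a := by
    have := congrArg ptraceA hFsq
    rwa [aux_ptraceA_mul, aux_ptraceA_mul] at this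
  have hBu : IsUnit (ptraceB ρ).det := isUnit_iff_ne_zero.mpr hfullB
  have hAu : IsUnit (ptraceA ρ).det := isUnit_iff_ne_zero.mpr hfullA
  constructor
  · have := congrArg (fun M => (ptraceB ρ)⁻¹ * M) hEfin
    simpa [Matrix.nonsing_inv_mul_cancel_left _ _ hBu] using this
  · have := congrArg (fun M => (ptraceA ρ)⁻¹ * M) hFfin
    simpa [Matrix.nonsing_inv_mul_cancel_left _ _ hAu] using this
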